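/- Let ζ be a state on a finite-dimensional system T, let m ≥ 1, and let η be a state on T^{⊗m}. For 0 ≤ j ≤ m write η_{1:j} for the marginal of η on its first j tensor factors (η_{1:0} := 1 ∈ ℂ), and η_i for the marginal on the i-th factor. Define the state ν₂ := (1/m) ∑_{i=1}^{m} ζ^{⊗(i−1)} ⊗ η_{1:m−i+1} ⊗ |i⟩⟨i| on T^{⊗m} ⊗ ℂ^m. Then: (a) the partial trace of ν₂ over the m-th T-factor equals ω := (1/m) ∑_{i=1}^{m} ζ^{⊗(i−1)} ⊗ η_{1:m−i} ⊗ |i⟩⟨i| on T^{⊗(m−1)} ⊗ ℂ^m; (b) the partial trace of ν₂ over the first m−1 T-factors and the classical register ℂ^m equals ν' := (1/m) ∑_{i=1}^{m} η_i; consequently, if Δ(η_i, σ) ≤ ε for all i and some state σ on T, then Δ(ν', σ) ≤ ε. -/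

import Mathlib

set_option maxHeartbeats 1000000


open scoped BigOperators
open Matrix
open ComplexOrder

noncomputable section

namespace PaperQI

/-- The trace norm `tr √(MᴴM)` of a complex square matrix (sum of singular values). -/
noncomputable def traceNorm {ι : Type} [Fintype ι] [DecidableEq ι] (M : Matrix ι ι ℂ) : ℝ :=
  ((((Matrix.posSemidef_conjTranspose_mul_self M).1.eigenvectorUnitary : Matrix ι ι ℂ) *
    Matrix.diagonal (((↑) : ℝ → ℂ) ∘ (Real.sqrt ∘ (Matrix.posSemidef_conjTranspose_mul_self M).1.eigenvalues)) *
    (star (Matrix.posSemidef_conjTranspose_mul_self M).1.eigenvectorUnitary : Matrix ι ι ℂ)).trace).re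

/-- The trace distance `Δ(ρ,σ) = ½‖ρ − σ‖₁`. -/
noncomputable def traceDist {ι : Type} [Fintype ι] [DecidableEq ι] (ρ σ : Matrix ι ι ℂ) : ℝ :=
  traceNorm (ρ - σ) / 2

/-- A quantum state: a positive semidefinite matrix of unit trace. -/
def IsState {ι : Type} [Fintype ι] (M : Matrix ι ι ℂ) : Prop :=
  M.PosSemidef ∧ M.trace = 1

/-- Kronecker/tensor product of two matrices, on the product index type. -/
def kron {ι κ : Type} (M : Matrix ι ι ℂ) (N : Matrix κ κ ℂ) :
    Matrix (ι × κ) (ι × κ) ℂ := fun p q => M p.1 q.1 * N p.2 q.2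

/-- The `n`-fold tensor power `ρ^{⊗n}`. -/
def tensorPow {ι : Type} (ρ : Matrix ι ι ℂ) (n : ℕ) :
    Matrix (Fin n → ι) (Fin n → ι) ℂ := fun x y => ∏ i, ρ (x i) (y i)

/-- Partial trace over the second tensor factor. -/
noncomputable def ptraceRight {ι κ : Type} [Fintype κ] (M : Matrix (ι × κ) (ι × κ) ℂ) :
    Matrix ι ι ℂ := fun a b => ∑ c, M (a, c) (b, c)

/-- Partial trace over the first tensor factor. -/
noncomputable def ptraceLeft {ι κ : Type} [Fintype ι] (M : Matrix (ι × κ) (ι × κ) ℂ) :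
    Matrix κ κ ℂ := fun a b => ∑ c, M (c, a) (c, b)

/-- Marginal of a multipartite state on `S^{⊗m}` on the `i`-th tensor factor. -/
noncomputable def marginal {ι : Type} [Fintype ι] [DecidableEq ι] {m : ℕ}
    (η : Matrix (Fin m → ι) (Fin m → ι) ℂ) (i : Fin m) : Matrix ι ι ℂ :=
  fun a b => ∑ x : Fin m → ι, if x i = a then η x (Function.update x i b) else 0

/-- The extension `id_τ ⊗ Φ` of a map on matrices, acting blockwise. -/
def rightExt {ι κ τ : Type} (Φ : Matrix ι ι ℂ → Matrix κ κ ℂ) :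
    Matrix (τ × ι) (τ × ι) ℂ → Matrix (τ × κ) (τ × κ) ℂ :=
  fun M p q => Φ (fun x y => M (p.1, x) (q.1, y)) p.2 q.2

/-- The extension `Φ ⊗ id_τ`. -/
def leftExt {ι κ τ : Type} (Φ : Matrix ι ι ℂ → Matrix κ κ ℂ) :
    Matrix (ι × τ) (ι × τ) ℂ → Matrix (κ × τ) (κ × τ) ℂ :=
  fun M p q => Φ (fun x y => M (x, p.2) (y, q.2)) p.1 q.1

/-- Complete positivity: every finite-dimensional extension `id ⊗ Φ` preserves
positive semidefiniteness. -/
def IsCP {ι κ : Type} [Fintype ι] [Fintype κ] (Φ : Matrix ι ι ℂ → Matrix κ κ ℂ) : Prop :=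
  ∀ (n : ℕ) (M : Matrix (Fin n × ι) (Fin n × ι) ℂ), M.PosSemidef →
    (rightExt Φ M).PosSemidef

/-- Trace preserving. -/
def IsTP {ι κ : Type} [Fintype ι] [Fintype κ] (Φ : Matrix ι ι ℂ → Matrix κ κ ℂ) : Prop :=
  ∀ M, (Φ M).trace = M.trace

/-- Trace nonincreasing on positive semidefinite inputs. -/
def IsTNI {ι κ : Type} [Fintype ι] [Fintype κ] (Φ : Matrix ι ι ℂ → Matrix κ κ ℂ) : Prop :=
  ∀ M : Matrix ι ι ℂ, M.PosSemidef → ((Φ M).trace).re ≤ (M.trace).re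

/-- A quantum channel: linear, completely positive and trace preserving. -/
def IsChannel {ι κ : Type} [Fintype ι] [Fintype κ] (Φ : Matrix ι ι ℂ → Matrix κ κ ℂ) : Prop :=
  IsLinearMap ℂ Φ ∧ IsCP Φ ∧ IsTP Φ


/-- Marginal of a state on `T^{⊗m}` on its first `j` tensor factors. -/
noncomputable def margFirst {T : Type} [Fintype T] [DecidableEq T] {m : ℕ}
    (η : Matrix (Fin m → T) (Fin m → T) ℂ) (j : ℕ) (hj : j ≤ m) :
    Matrix (Fin j → T) (Fin j → T) ℂ :=
  fun a b => ∑ x : Fin m → T,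
    if (fun t : Fin j => x (Fin.castLE hj t)) = a
    then η x (fun s : Fin m => if h : (s : ℕ) < j then b ⟨s, h⟩ else x s) else 0

/-- The catalyst state `ω = (1/m) ∑_{i=1}^{m} ζ^{⊗(i−1)} ⊗ η_{1:m−i} ⊗ |i⟩⟨i|` on
`T^{⊗(m−1)} ⊗ ℂ^m`. -/
noncomputable def catalystState {T : Type} [Fintype T] [DecidableEq T] (m : ℕ)
    (ζ : Matrix T T ℂ) (η : Matrix (Fin m → T) (Fin m → T) ℂ) :
    Matrix ((Fin (m - 1) → T) × Fin m) ((Fin (m - 1) → T) × Fin m) ℂ :=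
  fun p q =>
    if p.2 = q.2 then
      (1 / (m : ℂ)) *
        (∏ t : Fin (m - 1), if (t : ℕ) < (p.2 : ℕ) then ζ (p.1 t) (q.1 t) else 1) *
        margFirst η (m - 1 - (p.2 : ℕ)) (by omega)
          (fun t => p.1 ⟨(p.2 : ℕ) + (t : ℕ), by have := t.isLt; have := p.2.isLt; omega⟩)
          (fun t => q.1 ⟨(p.2 : ℕ) + (t : ℕ), by have := t.isLt; have := p.2.isLt; omega⟩)
    else 0

/-- The state `ν₂ = (1/m) ∑_{i=1}^{m} ζ^{⊗(i−1)} ⊗ η_{1:m−i+1} ⊗ |i⟩⟨i|` on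
`T^{⊗m} ⊗ ℂ^m`. -/
noncomputable def nu2 {T : Type} [Fintype T] [DecidableEq T] {m : ℕ}
    (ζ : Matrix T T ℂ) (η : Matrix (Fin m → T) (Fin m → T) ℂ) :
    Matrix ((Fin m → T) × Fin m) ((Fin m → T) × Fin m) ℂ :=
  fun p q =>
    if p.2 = q.2 then
      (1 / (m : ℂ)) *
        (∏ t : Fin m, if (t : ℕ) < (p.2 : ℕ) then ζ (p.1 t) (q.1 t) else 1) *
        margFirst η (m - (p.2 : ℕ)) (by omega)
          (fun t => p.1 ⟨(p.2 : ℕ) + (t : ℕ), by have := t.isLt; have := p.2.isLt; omega⟩)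
          (fun t => q.1 ⟨(p.2 : ℕ) + (t : ℕ), by have := t.isLt; have := p.2.isLt; omega⟩)
    else 0

/-- Partial trace over the last `T`-tensor factor of a state on `T^{⊗m} ⊗ ℂ^m`. -/
noncomputable def ptraceLastBlock {T : Type} [Fintype T] {m r : ℕ}
    (M : Matrix ((Fin m → T) × Fin r) ((Fin m → T) × Fin r) ℂ) :
    Matrix ((Fin (m - 1) → T) × Fin r) ((Fin (m - 1) → T) × Fin r) ℂ :=
  fun p q => ∑ t : T,
    M ((fun s : Fin m => if h : (s : ℕ) < m - 1 then p.1 ⟨s, h⟩ else t), p.2)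
      ((fun s : Fin m => if h : (s : ℕ) < m - 1 then q.1 ⟨s, h⟩ else t), q.2)

/-- Partial trace over the first `m−1` `T`-tensor factors and the classical register of a
state on `T^{⊗m} ⊗ ℂ^r`. -/
noncomputable def ptraceAllButLast {T : Type} [Fintype T] [DecidableEq T] {m r : ℕ}
    (M : Matrix ((Fin m → T) × Fin r) ((Fin m → T) × Fin r) ℂ) :
    Matrix T T ℂ :=
  fun a b => ∑ c : Fin r, ∑ z : Fin (m - 1) → T,
    M ((fun s : Fin m => if h : (s : ℕ) < m - 1 then z ⟨s, h⟩ else a), c)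
      ((fun s : Fin m => if h : (s : ℕ) < m - 1 then z ⟨s, h⟩ else b), c)


-- ===================== auxiliary lemmas =====================

section TraceNormFacts

variable {ι : Type} [Fintype ι] [DecidableEq ι] {A B : Matrix ι ι ℂ}

/-- Functional calculus for a Hermitian matrix via its spectral decomposition. -/
noncomputable def hfun (hA : A.IsHermitian) (f : ℝ → ℝ) : Matrix ι ι ℂ :=
  (hA.eigenvectorUnitary : Matrix ι ι ℂ) * Matrix.diagonal (fun i => (f (hA.eigenvalues i) : ℂ)) *
    star (hA.eigenvectorUnitary : Matrix ι ι ℂ)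

lemma hfun_mul (hA : A.IsHermitian) (f g : ℝ → ℝ) :
    hfun hA f * hfun hA g = hfun hA (fun x => f x * g x) := by
  unfold hfun
  have h1 : star (hA.eigenvectorUnitary : Matrix ι ι ℂ) * (hA.eigenvectorUnitary : Matrix ι ι ℂ) = 1 :=
    Unitary.coe_star_mul_self hA.eigenvectorUnitary
  calc (hA.eigenvectorUnitary : Matrix ι ι ℂ) * Matrix.diagonal (fun i => (f (hA.eigenvalues i) : ℂ)) *
        star (hA.eigenvectorUnitary : Matrix ι ι ℂ) *
        ((hA.eigenvectorUnitary : Matrix ι ι ℂ) * Matrix.diagonal (fun i => (g (hA.eigenvalues i) : ℂ)) *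
        star (hA.eigenvectorUnitary : Matrix ι ι ℂ))
      = (hA.eigenvectorUnitary : Matrix ι ι ℂ) * (Matrix.diagonal (fun i => (f (hA.eigenvalues i) : ℂ)) *
        ((star (hA.eigenvectorUnitary : Matrix ι ι ℂ) * (hA.eigenvectorUnitary : Matrix ι ι ℂ)) *
        Matrix.diagonal (fun i => (g (hA.eigenvalues i) : ℂ)))) *
        star (hA.eigenvectorUnitary : Matrix ι ι ℂ) := by
        simp only [Matrix.mul_assoc]
    _ = _ := by rw [h1, one_mul, diagonal_mul_diagonal]; push_cast; rfl

lemma hfun_id (hA : A.IsHermitian) : hfun hA (fun x => x) = A := by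
  unfold hfun; exact hA.spectral_theorem.symm

lemma hfun_one (hA : A.IsHermitian) : hfun hA (fun _ => 1) = 1 := by
  unfold hfun
  simp [Matrix.diagonal_one, Unitary.coe_mul_star_self hA.eigenvectorUnitary]

lemma hfun_add (hA : A.IsHermitian) (f g : ℝ → ℝ) :
    hfun hA f + hfun hA g = hfun hA (fun x => f x + g x) := by
  unfold hfun
  rw [← add_mul, ← mul_add]
  congr 2
  rw [diagonal_add]
  congr 1
  push_cast
  rfl

lemma hfun_isHermitian (hA : A.IsHermitian) (f : ℝ → ℝ) : (hfun hA f).IsHermitian := by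
  have hD : (Matrix.diagonal (fun i => (f (hA.eigenvalues i) : ℂ)))ᴴ
      = Matrix.diagonal (fun i => (f (hA.eigenvalues i) : ℂ)) := by
    rw [diagonal_conjTranspose]
    congr 1
    funext i
    simp [Pi.star_def]
  unfold hfun Matrix.IsHermitian
  simp only [conjTranspose_mul, conjTranspose_conjTranspose, Matrix.star_eq_conjTranspose, hD,
    Matrix.mul_assoc]

lemma hfun_posSemidef (hA : A.IsHermitian) {f : ℝ → ℝ} (hf : ∀ x, 0 ≤ f x) :
    (hfun hA f).PosSemidef := by
  have hD : (Matrix.diagonal (fun i => (f (hA.eigenvalues i) : ℂ))).PosSemidef := by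
    apply PosSemidef.diagonal
    intro i
    simpa using hf _
  simpa [hfun, Matrix.star_eq_conjTranspose] using
    hD.mul_mul_conjTranspose_same (hA.eigenvectorUnitary : Matrix ι ι ℂ)

lemma hfun_trace (hA : A.IsHermitian) (f : ℝ → ℝ) :
    (hfun hA f).trace = ((∑ i, f (hA.eigenvalues i) : ℝ) : ℂ) := by
  unfold hfun
  rw [Matrix.trace_mul_cycle, Unitary.coe_star_mul_self hA.eigenvectorUnitary,
    one_mul, Matrix.trace_diagonal]
  push_cast; rfl

lemma hfun_sub (hA : A.IsHermitian) (f g : ℝ → ℝ) :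
    hfun hA f - hfun hA g = hfun hA (fun x => f x - g x) := by
  have := hfun_add hA (fun x => f x - g x) g
  simp only [sub_add_cancel] at this
  rw [← this]; abel

lemma trace_re_nonneg {M : Matrix ι ι ℂ} (hM : M.PosSemidef) : 0 ≤ M.trace.re := by
  have h : ∀ i, 0 ≤ (M i i).re := by
    intro i
    have := hM.re_dotProduct_nonneg (Pi.single i 1)
    simpa [dotProduct, Matrix.mulVec, Pi.single_apply, mul_ite, ite_mul,
      Finset.sum_ite_eq] using this
  rw [Matrix.trace]
  rw [Complex.re_sum]
  exact Finset.sum_nonneg fun i _ => h i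

lemma trace_mul_re_nonneg {M N : Matrix ι ι ℂ} (hM : M.PosSemidef) (hN : N.PosSemidef) :
    0 ≤ ((M * N).trace).re := by
  have hsq : hfun hM.1 Real.sqrt * hfun hM.1 Real.sqrt = M := by
    rw [hfun_mul]; conv_rhs => rw [← hfun_id hM.1]
    unfold hfun; congr 3; funext i; simp only [Real.mul_self_sqrt (hM.eigenvalues_nonneg i)]
  have h2 : ((M * N).trace) = ((hfun hM.1 Real.sqrt * N * hfun hM.1 Real.sqrt)).trace := by
    conv_lhs => rw [← hsq]
    rw [Matrix.mul_assoc, Matrix.trace_mul_comm]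
  rw [h2]
  have h3 : (hfun hM.1 Real.sqrt * N * hfun hM.1 Real.sqrt).PosSemidef := by
    have := hN.conjTranspose_mul_mul_same (hfun hM.1 Real.sqrt)
    rwa [show (hfun hM.1 Real.sqrt)ᴴ = hfun hM.1 Real.sqrt from hfun_isHermitian hM.1 _] at this
  exact trace_re_nonneg h3

lemma hfun_eq_cfc (hA : A.IsHermitian) (f : ℝ → ℝ) : hfun hA f = cfc f A := by
  rw [hA.cfc_eq, IsHermitian.cfc, Unitary.conjStarAlgAut_apply]; rfl

lemma traceNorm_eq_cfc (M : Matrix ι ι ℂ) :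
    traceNorm M = (cfc Real.sqrt (Mᴴ * M)).trace.re := by
  rw [(Matrix.posSemidef_conjTranspose_mul_self M).1.cfc_eq, IsHermitian.cfc,
    Unitary.conjStarAlgAut_apply]; rfl

lemma traceNorm_herm (hA : A.IsHermitian) : traceNorm A = ∑ i, |hA.eigenvalues i| := by
  have hsa : IsSelfAdjoint A := hA
  have hAA : A * A = cfc (fun x : ℝ => x * x) A := by
    rw [cfc_mul (fun x : ℝ => x) (fun x : ℝ => x) A, cfc_id' ℝ A]
  have habs : cfc Real.sqrt (Aᴴ * A) = hfun hA (fun x => |x|) := by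
    rw [hA.eq, hAA, ← cfc_comp Real.sqrt (fun x : ℝ => x * x) A, hfun_eq_cfc]
    congr 1
    funext x
    exact Real.sqrt_mul_self_eq_abs x
  rw [traceNorm_eq_cfc, habs, hfun_trace]
  simp

lemma trace_mul_re_le (hA : A.IsHermitian) {X : Matrix ι ι ℂ}
    (h1 : ((1 : Matrix ι ι ℂ) - X).PosSemidef) (h2 : ((1 : Matrix ι ι ℂ) + X).PosSemidef) :
    ((X * A).trace).re ≤ traceNorm A := by
  set P := hfun hA (fun x => max x 0) with hPdef
  set N := hfun hA (fun x => max (-x) 0) with hNdef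
  have hP : P.PosSemidef := hfun_posSemidef hA (fun x => le_max_right _ _)
  have hN : N.PosSemidef := hfun_posSemidef hA (fun x => le_max_right _ _)
  have hPN : A = P - N := by
    rw [hPdef, hNdef, hfun_sub]
    have : (fun x => max x 0 - max (-x) 0) = (fun x : ℝ => x) := by
      funext x; rcases le_total x 0 with h | h
      · rw [max_eq_right h, max_eq_left (by linarith)]; ring
      · rw [max_eq_left h, max_eq_right (by linarith)]; ring
    rw [this, hfun_id]
  have e1 : 0 ≤ ((P.trace).re - ((X * P).trace).re) := by
    have := trace_mul_re_nonneg h1 hP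
    rwa [sub_mul, one_mul, Matrix.trace_sub, Complex.sub_re] at this
  have e2 : 0 ≤ ((N.trace).re + ((X * N).trace).re) := by
    have := trace_mul_re_nonneg h2 hN
    rwa [add_mul, one_mul, Matrix.trace_add, Complex.add_re] at this
  have e3 : ((X * A).trace).re = ((X * P).trace).re - ((X * N).trace).re := by
    rw [hPN, mul_sub, Matrix.trace_sub, Complex.sub_re]
  have e4 : traceNorm A = (P.trace).re + (N.trace).re := by
    rw [traceNorm_herm hA, hPdef, hNdef, hfun_trace, hfun_trace]
    simp only [Complex.ofReal_re]
    rw [← Finset.sum_add_distrib]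
    exact Finset.sum_congr rfl fun i _ => by
      rcases le_total (hA.eigenvalues i) 0 with h | h
      · rw [abs_of_nonpos h, max_eq_right h, max_eq_left (by linarith)]; ring
      · rw [abs_of_nonneg h, max_eq_left h, max_eq_right (by linarith)]; ring
  linarith

lemma traceNorm_triangle (hA : A.IsHermitian) (hB : B.IsHermitian) :
    traceNorm (A + B) ≤ traceNorm A + traceNorm B := by
  have hC : (A + B).IsHermitian := hA.add hB
  set sgn : ℝ → ℝ := fun x => if 0 ≤ x then 1 else -1 with hsgn
  set X := hfun hC sgn with hX
  have h1 : ((1 : Matrix ι ι ℂ) - X).PosSemidef := by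
    rw [hX, ← hfun_one hC, hfun_sub]
    refine hfun_posSemidef hC ?_
    intro x
    by_cases h : 0 ≤ x <;> simp [hsgn, h]
  have h2 : ((1 : Matrix ι ι ℂ) + X).PosSemidef := by
    rw [hX, ← hfun_one hC, hfun_add]
    refine hfun_posSemidef hC ?_
    intro x
    by_cases h : 0 ≤ x
    · simp [hsgn, h]
    · simp only [hsgn, if_neg h]; norm_num
  have key : ((X * (A + B)).trace).re = traceNorm (A + B) := by
    have : X * (A + B) = hfun hC (fun x => |x|) := by
      have step : X * (A + B) = hfun hC sgn * hfun hC (fun x => x) := by rw [hfun_id]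
      rw [step, hfun_mul]
      refine congrArg (hfun hC) (funext fun x => ?_)
      rcases le_or_gt 0 x with h | h
      · simp [hsgn, h, abs_of_nonneg h]
      · simp [hsgn, not_le.mpr h, abs_of_neg h]
    rw [this, hfun_trace, traceNorm_herm hC]
    simp
  have splt : ((X * (A + B)).trace).re = ((X * A).trace).re + ((X * B).trace).re := by
    rw [mul_add, Matrix.trace_add, Complex.add_re]
  have lA := trace_mul_re_le hA h1 h2
  have lB := trace_mul_re_le hB h1 h2
  linarith

lemma posSemidef_smul {M : Matrix ι ι ℂ} (hM : M.PosSemidef) {c : ℝ} (hc : 0 ≤ c) :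
    ((c : ℂ) • M).PosSemidef := by
  exact hM.smul (by exact_mod_cast hc)

lemma traceNorm_smul (M : Matrix ι ι ℂ) {c : ℝ} (hc : 0 ≤ c) :
    traceNorm ((c : ℂ) • M) = c * traceNorm M := by
  have hS : IsSelfAdjoint (Mᴴ * M) := (Matrix.posSemidef_conjTranspose_mul_self M).1
  have hcM : ((c : ℂ) • M)ᴴ * ((c : ℂ) • M) = (c ^ 2 : ℝ) • (Mᴴ * M) := by
    rw [conjTranspose_smul, smul_mul_assoc, mul_smul_comm, smul_smul, Complex.star_def,
      Complex.conj_ofReal, ← Complex.ofReal_mul, ← pow_two, ← Complex.coe_smul]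
  have key : cfc Real.sqrt (((c : ℂ) • M)ᴴ * ((c : ℂ) • M)) = c • cfc Real.sqrt (Mᴴ * M) := by
    rw [hcM, ← cfc_comp_smul (c ^ 2 : ℝ) Real.sqrt (Mᴴ * M), ← cfc_const_mul c Real.sqrt (Mᴴ * M)]
    congr 1
    funext x
    rw [smul_eq_mul, Real.sqrt_mul (sq_nonneg c), Real.sqrt_sq hc]
  rw [traceNorm_eq_cfc, traceNorm_eq_cfc, key, Matrix.trace_smul, Complex.smul_re, smul_eq_mul]

lemma traceNorm_zero : traceNorm (0 : Matrix ι ι ℂ) = 0 := by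
  have := traceNorm_smul (0 : Matrix ι ι ℂ) (le_refl 0)
  simpa using this

lemma traceNorm_sum_le {κ : Type} (s : Finset κ) (f : κ → Matrix ι ι ℂ)
    (hf : ∀ i ∈ s, (f i).IsHermitian) :
    traceNorm (∑ i ∈ s, f i) ≤ ∑ i ∈ s, traceNorm (f i) := by
  induction s using Finset.cons_induction with
  | empty => simp [traceNorm_zero]
  | cons a s ha ih =>
    rw [Finset.sum_cons, Finset.sum_cons]
    have hsum : (∑ i ∈ s, f i).IsHermitian := by
      rw [Matrix.IsHermitian, conjTranspose_sum]
      exact Finset.sum_congr rfl fun i hi => (hf i (Finset.mem_cons_of_mem hi)).eq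
    have t1 := traceNorm_triangle (hf a (Finset.mem_cons_self a s)) hsum
    have t2 := ih fun i hi => hf i (Finset.mem_cons_of_mem hi)
    linarith

end TraceNormFacts

lemma marginal_isHermitian {T : Type} [Fintype T] [DecidableEq T] {m : ℕ}
    {η : Matrix (Fin m → T) (Fin m → T) ℂ} (hη : η.IsHermitian) (i : Fin m) :
    (marginal η i).IsHermitian := by
  have hsym : ∀ u v, star (η v u) = η u v := fun u v => congrFun (congrFun hη u) v
  show (marginal η i)ᴴ = marginal η i
  funext a b
  rw [Matrix.conjTranspose_apply]
  unfold marginal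
  rw [star_sum]
  simp only [apply_ite (star : ℂ → ℂ), star_zero, hsym]
  rw [← Finset.sum_filter, ← Finset.sum_filter]
  refine Finset.sum_nbij' (fun x => Function.update x i a) (fun y => Function.update y i b)
    ?_ ?_ ?_ ?_ ?_
  · intro x hx
    simp [Function.update_self]
  · intro y hy
    simp [Function.update_self]
  · intro x hx
    simp only [Finset.mem_filter, Finset.mem_univ, true_and] at hx
    simp only [Function.update_idem]
    rw [← hx, Function.update_eq_self]
  · intro y hy
    simp only [Finset.mem_filter, Finset.mem_univ, true_and] at hy
    simp only [Function.update_idem]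
    rw [← hy, Function.update_eq_self]
  · intro x hx
    simp only [Finset.mem_filter, Finset.mem_univ, true_and] at hx
    simp only [Function.update_idem]
    rw [← hx, Function.update_eq_self]

lemma avg_close {T : Type} [Fintype T] [DecidableEq T] {m : ℕ} (hm : 1 ≤ m)
    (η : Matrix (Fin m → T) (Fin m → T) ℂ) (hη : IsState η)
    (σ : Matrix T T ℂ) (hσ : IsState σ) (ε : ℝ)
    (hcl : ∀ i : Fin m, traceDist (marginal η i) σ ≤ ε) :
    traceDist ((1 / (m : ℂ)) • ∑ i : Fin m, marginal η i) σ ≤ ε := by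
  have hm0 : (0:ℝ) < (m:ℝ) := by exact_mod_cast hm
  have hmC : ((m:ℕ):ℂ) ≠ 0 := by exact_mod_cast hm0.ne'
  have hdiff : ∀ i : Fin m, (marginal η i - σ).IsHermitian :=
    fun i => (marginal_isHermitian hη.1.isHermitian i).sub hσ.1.isHermitian
  have hrw : (1 / (m : ℂ)) • (∑ i : Fin m, marginal η i) - σ
      = (((1/(m:ℝ)) : ℝ) : ℂ) • ∑ i : Fin m, (marginal η i - σ) := by
    rw [Finset.sum_sub_distrib, smul_sub, Finset.sum_const, Finset.card_univ, Fintype.card_fin]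
    have h1 : (((1/(m:ℝ)) : ℝ) : ℂ) = 1/(m:ℂ) := by push_cast; rfl
    rw [h1]
    congr 1
    rw [← Nat.cast_smul_eq_nsmul ℂ m σ, smul_smul, one_div, inv_mul_cancel₀ hmC, one_smul]
  rw [traceDist, hrw, traceNorm_smul _ (by positivity)]
  have hb : ∀ i : Fin m, traceNorm (marginal η i - σ) ≤ 2 * ε := by
    intro i
    have := hcl i
    rw [traceDist] at this
    linarith
  have h2 := traceNorm_sum_le Finset.univ (fun i : Fin m => marginal η i - σ)
    (fun i _ => hdiff i)
  have h3 : ∑ i : Fin m, traceNorm (marginal η i - σ) ≤ (m:ℝ) * (2*ε) := by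
    calc ∑ i : Fin m, traceNorm (marginal η i - σ) ≤ ∑ _i : Fin m, 2*ε :=
          Finset.sum_le_sum (fun i _ => hb i)
      _ = (m:ℝ) * (2*ε) := by
          rw [Finset.sum_const, Finset.card_univ, Fintype.card_fin, nsmul_eq_mul]
  have h4 : 1/(m:ℝ) * traceNorm (∑ i : Fin m, (marginal η i - σ))
      ≤ 1/(m:ℝ) * ((m:ℝ) * (2*ε)) :=
    mul_le_mul_of_nonneg_left (le_trans h2 h3) (by positivity)
  have h5 : 1/(m:ℝ) * ((m:ℝ) * (2*ε)) = 2*ε := by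
    field_simp
  linarith

lemma aux_a {T : Type} [Fintype T] [DecidableEq T] {k : ℕ}
    (η : Matrix (Fin (k+1) → T) (Fin (k+1) → T) ℂ) (i : ℕ) (hik : i ≤ k)
    (a b : Fin k → T) (h1 : k+1-i ≤ k+1) (h2 : k-i ≤ k+1)
    (A B : Fin (k-i) → T)
    (hA : ∀ u : Fin (k-i), A u = a ⟨i+(u:ℕ), by omega⟩)
    (hB : ∀ u : Fin (k-i), B u = b ⟨i+(u:ℕ), by omega⟩) :
    ∑ t : T, margFirst η (k+1-i) h1
        (fun u => if h : i + (u : ℕ) < k then a ⟨i+(u:ℕ), h⟩ else t)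
        (fun u => if h : i + (u : ℕ) < k then b ⟨i+(u:ℕ), h⟩ else t)
      = margFirst η (k-i) h2 A B := by
  unfold margFirst
  rw [Finset.sum_comm]
  refine Finset.sum_congr rfl fun x _ => ?_
  have hki : k - i < k + 1 := by omega
  set t0 : T := x ⟨k-i, hki⟩ with ht0
  rw [Finset.sum_eq_single t0]
  · have hD : (fun s : Fin (k+1) => if h : (s : ℕ) < k+1-i then
          (fun u : Fin (k+1-i) => if h' : i + (u : ℕ) < k then b ⟨i+(u:ℕ), h'⟩ else t0) ⟨(s:ℕ), h⟩ else x s)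
        = (fun s : Fin (k+1) => if h : (s : ℕ) < k-i then B ⟨(s:ℕ), h⟩ else x s) := by
      funext s
      show (if h : (s : ℕ) < k+1-i then
          (if h' : i + ((⟨(s:ℕ), h⟩ : Fin (k+1-i)) : ℕ) < k then b ⟨i+((⟨(s:ℕ), h⟩ : Fin (k+1-i)) : ℕ), h'⟩ else t0) else x s) = _
      simp only [Fin.val_mk]
      by_cases hs : (s : ℕ) < k + 1 - i
      · rw [dif_pos hs]
        by_cases hs2 : (s : ℕ) < k - i
        · rw [dif_pos (show i + (s:ℕ) < k by omega), dif_pos hs2, hB]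
        · rw [dif_neg (show ¬ i + (s:ℕ) < k by omega), dif_neg hs2, ht0]
          congr 1
          exact Fin.ext (by simp; omega)
      · rw [dif_neg hs, dif_neg (by omega)]
    have hC : ((fun u : Fin (k+1-i) => x (Fin.castLE h1 u)) =
          (fun u : Fin (k+1-i) => if h : i + (u : ℕ) < k then a ⟨i+(u:ℕ), h⟩ else t0))
        ↔ ((fun u : Fin (k-i) => x (Fin.castLE h2 u)) = A) := by
      rw [funext_iff, funext_iff]
      constructor
      · intro h u
        have hu : (u : ℕ) < k + 1 - i := by omega
        have := h ⟨(u : ℕ), hu⟩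
        simp only [Fin.val_mk] at this
        rw [dif_pos (show i + (u:ℕ) < k by omega)] at this
        rw [hA]
        exact this
      · intro h u
        by_cases hu : i + (u : ℕ) < k
        · rw [dif_pos hu]
          have := h ⟨(u : ℕ), by omega⟩
          rw [hA] at this
          exact this
        · rw [dif_neg hu, ht0]
          have : (u : ℕ) = k - i := by omega
          congr 1
          exact Fin.ext (by simpa using this)
    exact if_congr hC (by rw [hD]) rfl
  · intro t _ hne
    rw [if_neg]
    intro hc
    apply hne
    have := congrFun hc ⟨k-i, by omega⟩
    simp only [Fin.val_mk] at this
    rw [dif_neg (by omega)] at this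
    rw [ht0, ← this]
    rfl
  · intro h
    exact absurd (Finset.mem_univ t0) h

lemma part_a {T : Type} [Fintype T] [DecidableEq T] {k : ℕ}
    (ζ : Matrix T T ℂ) (η : Matrix (Fin (k+1) → T) (Fin (k+1) → T) ℂ) :
    ptraceLastBlock (nu2 ζ η) = catalystState (k+1) ζ η := by
  funext p q
  obtain ⟨a, i⟩ := p
  obtain ⟨b, i2⟩ := q
  by_cases hii : i = i2
  · subst hii
    simp only [ptraceLastBlock, nu2, catalystState, Nat.add_sub_cancel, eq_self_iff_true, if_true]
    have hZ : ∀ t : T, (∏ s : Fin (k+1), if (s:ℕ) < (i:ℕ) then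
          ζ (if h : (s:ℕ) < k then a ⟨(s:ℕ), h⟩ else t) (if h : (s:ℕ) < k then b ⟨(s:ℕ), h⟩ else t)
        else 1) = ∏ s : Fin (k+1-1), if (s:ℕ) < (i:ℕ) then ζ (a s) (b s) else 1 := by
      intro t
      rw [Fin.prod_univ_castSucc, if_neg (by have := i.isLt; simp only [Fin.val_last]; omega),
        mul_one]
      refine Finset.prod_congr rfl fun s _ => ?_
      simp
    simp only [hZ]
    rw [← Finset.mul_sum]
    exact congrArg _ (aux_a η (i:ℕ) (by omega) a b (by omega) (by omega) _ _
      (fun u => rfl) (fun u => rfl))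
  · simp [ptraceLastBlock, nu2, catalystState, hii]

lemma aux_b {T : Type} [Fintype T] [DecidableEq T] {k : ℕ}
    (ζ : Matrix T T ℂ) (hζtr : ζ.trace = 1)
    (η : Matrix (Fin (k+1) → T) (Fin (k+1) → T) ℂ) (c : ℕ) (hck : c ≤ k) (α β : T)
    (h1 : k+1-c ≤ k+1) (hlt : k - c < k+1) :
    ∑ z : Fin k → T,
      (∏ s : Fin k, if (s : ℕ) < c then ζ (z s) (z s) else 1) *
      margFirst η (k+1-c) h1
        (fun u => if h : c + (u : ℕ) < k then z ⟨c+(u:ℕ), h⟩ else α)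
        (fun u => if h : c + (u : ℕ) < k then z ⟨c+(u:ℕ), h⟩ else β)
    = marginal η ⟨k - c, hlt⟩ α β := by
  classical
  unfold margFirst marginal
  simp only [Finset.mul_sum]
  rw [Finset.sum_comm]
  refine Finset.sum_congr rfl fun x _ => ?_
  set i0 : Fin (k+1) := ⟨k - c, hlt⟩ with hi0
  set P : (Fin k → T) → Prop :=
    fun z => ∀ s : Fin k, c ≤ (s : ℕ) → z s = x ⟨(s : ℕ) - c, by omega⟩ with hP
  have hu0lt : k - c < k + 1 - c := by omega
  have hz : ∀ z : Fin k → T,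
      (∏ s : Fin k, if (s : ℕ) < c then ζ (z s) (z s) else 1) *
        (if (fun u : Fin (k+1-c) => x (Fin.castLE h1 u)) =
            (fun u : Fin (k+1-c) => if h : c + (u : ℕ) < k then z ⟨c+(u:ℕ), h⟩ else α)
         then η x (fun s : Fin (k+1) => if h : (s : ℕ) < k+1-c then
            (fun u : Fin (k+1-c) => if h' : c + (u : ℕ) < k then z ⟨c+(u:ℕ), h'⟩ else β) ⟨(s:ℕ), h⟩
            else x s) else 0)
      = (if x i0 = α then
          (if P z then (∏ s : Fin k, if (s : ℕ) < c then ζ (z s) (z s) else 1) else 0) *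
            η x (Function.update x i0 β)
        else 0) := by
    intro z
    by_cases hC : (fun u : Fin (k+1-c) => x (Fin.castLE h1 u)) =
        (fun u : Fin (k+1-c) => if h : c + (u : ℕ) < k then z ⟨c+(u:ℕ), h⟩ else α)
    · have h1α : x i0 = α := by
        have := congrFun hC ⟨k - c, hu0lt⟩
        simp only [Fin.val_mk] at this
        rw [dif_neg (by omega)] at this
        exact this
      have h2P : P z := by
        intro s hs
        have := congrFun hC ⟨(s : ℕ) - c, by omega⟩
        simp only [Fin.castLE_mk, Fin.val_mk] at this
        rw [dif_pos (by omega)] at this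
        rw [this]
        exact congrArg z (Fin.ext (by simp only [Fin.val_mk]; omega))
      have h3D : (fun s : Fin (k+1) => if h : (s : ℕ) < k+1-c then
            (fun u : Fin (k+1-c) => if h' : c + (u : ℕ) < k then z ⟨c+(u:ℕ), h'⟩ else β) ⟨(s:ℕ), h⟩
            else x s) = Function.update x i0 β := by
        funext s
        rw [Function.update_apply]
        show (if h : (s : ℕ) < k+1-c then
            (if h' : c + ((⟨(s:ℕ), h⟩ : Fin (k+1-c)) : ℕ) < k then z ⟨c+((⟨(s:ℕ), h⟩ : Fin (k+1-c)):ℕ), h'⟩ else β)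
            else x s) = _
        simp only [Fin.val_mk]
        by_cases h : (s : ℕ) < k + 1 - c
        · rw [dif_pos h]
          by_cases h2 : c + (s : ℕ) < k
          · rw [dif_pos h2, if_neg (show ¬ s = i0 from fun hs => by
              rw [hi0] at hs; have := congrArg Fin.val hs; simp only [Fin.val_mk] at this; omega)]
            have := h2P ⟨c + (s : ℕ), h2⟩ (by simp only [Fin.val_mk]; omega)
            rw [this]
            exact congrArg x (Fin.ext (by simp only [Fin.val_mk]; omega))
          · rw [dif_neg h2, if_pos (show s = i0 from Fin.ext (by simp only [hi0, Fin.val_mk]; omega))]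
        · rw [dif_neg h, if_neg (show ¬ s = i0 from fun hs => by
            rw [hi0] at hs; have := congrArg Fin.val hs; simp only [Fin.val_mk] at this; omega)]
      rw [if_pos hC, if_pos h1α, if_pos h2P, h3D]
    · rw [if_neg hC, mul_zero]
      by_cases h1α : x i0 = α
      · by_cases h2P : P z
        · exfalso
          apply hC
          funext u
          by_cases hu : c + (u : ℕ) < k
          · rw [dif_pos hu]
            have := h2P ⟨c + (u : ℕ), hu⟩ (by simp only [Fin.val_mk]; omega)
            rw [this]
            exact congrArg x (Fin.ext (by simp only [Fin.coe_castLE, Fin.val_mk]; omega))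
          · rw [dif_neg hu]
            rw [← h1α]
            exact congrArg x (Fin.ext (by simp only [Fin.coe_castLE, hi0, Fin.val_mk]; omega))
        · rw [if_pos h1α, if_neg h2P, zero_mul]
      · rw [if_neg h1α]
  rw [Finset.sum_congr rfl fun z _ => hz z]
  by_cases h1α : x i0 = α
  · simp only [if_pos h1α]
    rw [← Finset.sum_mul]
    have hsum1 : (∑ z : Fin k → T,
        if P z then (∏ s : Fin k, if (s : ℕ) < c then ζ (z s) (z s) else 1) else 0) = 1 := by
      set g : Fin k → T → ℂ := fun s t => if (s : ℕ) < c then ζ t t else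
          (if t = x ⟨(s : ℕ) - c, by omega⟩ then 1 else 0) with hg
      have hfac : ∀ z : Fin k → T,
          (if P z then (∏ s : Fin k, if (s : ℕ) < c then ζ (z s) (z s) else 1) else 0)
          = ∏ s : Fin k, g s (z s) := by
        intro z
        by_cases hp : P z
        · rw [if_pos hp]
          refine Finset.prod_congr rfl fun s _ => ?_
          simp only [hg]
          by_cases hsc : (s : ℕ) < c
          · rw [if_pos hsc, if_pos hsc]
          · rw [if_neg hsc, if_neg hsc, if_pos (hp s (by omega))]
        · rw [if_neg hp]
          have hp' : ∃ s : Fin k, c ≤ (s : ℕ) ∧ z s ≠ x ⟨(s : ℕ) - c, by omega⟩ := by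
            by_contra hco
            push_neg at hco
            exact hp (fun s hs => hco s hs)
          obtain ⟨s0, hs0c, hs0⟩ := hp'
          refine (Finset.prod_eq_zero (Finset.mem_univ s0) ?_).symm
          simp only [hg]
          rw [if_neg (by omega), if_neg hs0]
      rw [Finset.sum_congr rfl fun z _ => hfac z, ← Fintype.prod_sum g]
      refine Finset.prod_eq_one fun s _ => ?_
      simp only [hg]
      by_cases hsc : (s : ℕ) < c
      · simp only [if_pos hsc]
        rw [show (1 : ℂ) = ζ.trace from hζtr.symm, Matrix.trace]
        rfl
      · simp only [if_neg hsc]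
        simp
    rw [hsum1, one_mul]
  · simp only [if_neg h1α, Finset.sum_const_zero]

lemma part_b {T : Type} [Fintype T] [DecidableEq T] {k : ℕ}
    (ζ : Matrix T T ℂ) (hζ : IsState ζ) (η : Matrix (Fin (k+1) → T) (Fin (k+1) → T) ℂ) :
    ptraceAllButLast (nu2 ζ η) = (1 / (((k+1) : ℕ) : ℂ)) • ∑ i : Fin (k+1), marginal η i := by
  funext α β
  simp only [ptraceAllButLast, nu2, Nat.add_sub_cancel, eq_self_iff_true, if_true,
    Matrix.smul_apply, Matrix.sum_apply, smul_eq_mul]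
  have hZ : ∀ (c : Fin (k+1)) (z : Fin k → T), (∏ s : Fin (k+1), if (s:ℕ) < (c:ℕ) then
        ζ (if h : (s:ℕ) < k then z ⟨(s:ℕ), h⟩ else α) (if h : (s:ℕ) < k then z ⟨(s:ℕ), h⟩ else β)
      else 1) = ∏ s : Fin (k+1-1), if (s:ℕ) < (c:ℕ) then ζ (z s) (z s) else 1 := by
    intro c z
    rw [Fin.prod_univ_castSucc, if_neg (by have := c.isLt; simp only [Fin.val_last]; omega),
      mul_one]
    refine Finset.prod_congr rfl fun s _ => ?_
    simp
  simp only [hZ, mul_assoc]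
  simp only [← Finset.mul_sum]
  congr 1
  have step : ∀ c : Fin (k+1), (∑ z : Fin (k+1-1) → T,
      (∏ s : Fin (k+1-1), if (s:ℕ) < (c:ℕ) then ζ (z s) (z s) else 1) *
      margFirst η (k+1-(c:ℕ)) (by omega)
        (fun u => if h : (c:ℕ) + (u:ℕ) < k then z ⟨(c:ℕ)+(u:ℕ), h⟩ else α)
        (fun u => if h : (c:ℕ) + (u:ℕ) < k then z ⟨(c:ℕ)+(u:ℕ), h⟩ else β))
      = marginal η ⟨k-(c:ℕ), by omega⟩ α β :=
    fun c => aux_b ζ hζ.2 η (c:ℕ) (by omega) α β (by omega) (by omega)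
  simp only [step]
  refine Fintype.sum_bijective Fin.rev Fin.rev_bijective _ _ fun c => ?_
  exact congrArg (fun j => marginal η j α β) (Fin.ext (by simp only [Fin.val_rev, Fin.val_mk]; omega))


/-- (a) The partial trace of `ν₂` over the `m`-th `T`-factor is the
catalyst `ω`; (b) the partial trace of `ν₂` over the first `m−1` `T`-factors and the
classical register is `ν' = (1/m) ∑_{i=1}^m η_i`; consequently, if every marginal `η_i` is
`ε`-close to a state `σ`, so is `ν'`. -/
theorem nu2_marginals {T : Type} [Fintype T] [DecidableEq T] {m : ℕ} (hm : 1 ≤ m)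
    (ζ : Matrix T T ℂ) (hζ : IsState ζ)
    (η : Matrix (Fin m → T) (Fin m → T) ℂ) (hη : IsState η) :
    ptraceLastBlock (nu2 ζ η) = catalystState m ζ η ∧
    ptraceAllButLast (nu2 ζ η) = (1 / (m : ℂ)) • ∑ i : Fin m, marginal η i ∧
    ∀ (σ : Matrix T T ℂ), IsState σ → ∀ ε : ℝ,
      (∀ i : Fin m, traceDist (marginal η i) σ ≤ ε) →
      traceDist ((1 / (m : ℂ)) • ∑ i : Fin m, marginal η i) σ ≤ ε := by
  obtain ⟨k, rfl⟩ : ∃ k, m = k + 1 := ⟨m - 1, by omega⟩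
  refine ⟨part_a ζ η, part_b ζ hζ η, ?_⟩
  intro σ hσ ε hcl
  exact avg_close hm η hη σ hσ ε hcl

end PaperQI
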